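/- Let R be a commutative ring and M, N be R-modules with M generated by v_1,...,v_n. A polynomial law φ from M to N is completely determined by the element ι(φ) := φ_{R[x_1,...,x_n]}(x_1 ⊗ v_1 + ... + x_n ⊗ v_n) of R[x_1,...,x_n] ⊗ N; that is, the map ι from polynomial laws M → N to R[x_1,...,x_n] ⊗ N is injective. If moreover M is free with basis v_1,...,v_n, then ι is a bijection. -/

import Mathlib

open scoped TensorProduct

universe u

/-- A polynomial law `M → N` over `R`: a family of maps `A ⊗[R] M → A ⊗[R] N`, one for every
commutative `R`-algebra `A`, commuting with base change along all `R`-algebra homomorphisms. -/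
structure PolyLaw (R : Type u) [CommRing R] (M N : Type u)
    [AddCommGroup M] [Module R M] [AddCommGroup N] [Module R N] : Type (u + 1) where
  toFun : ∀ (A : Type u) [CommRing A] [Algebra R A], A ⊗[R] M → A ⊗[R] N
  isCompat : ∀ {A B : Type u} [CommRing A] [Algebra R A] [CommRing B] [Algebra R B]
      (φ : A →ₐ[R] B) (x : A ⊗[R] M),
      LinearMap.rTensor N φ.toLinearMap (toFun A x) = toFun B (LinearMap.rTensor M φ.toLinearMap x)

namespace PolyLaw

variable {R : Type u} [CommRing R] {M N P : Type u}
  [AddCommGroup M] [Module R M] [AddCommGroup N] [Module R N] [AddCommGroup P] [Module R P]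

theorem ext' {f g : PolyLaw R M N}
    (h : ∀ (A : Type u) [CommRing A] [Algebra R A] (x : A ⊗[R] M), f.toFun A x = g.toFun A x) :
    f = g := by
  cases f; cases g
  simp only [mk.injEq]
  funext A instA instB x
  exact h A x

/-- A polynomial law is homogeneous of degree `d` if `φ_A (a • m) = a ^ d • φ_A m` always. -/
def IsHomogeneous (f : PolyLaw R M N) (d : ℕ) : Prop :=
  ∀ (A : Type u) [CommRing A] [Algebra R A] (a : A) (x : A ⊗[R] M),
    f.toFun A (a • x) = a ^ d • f.toFun A x

/-- The polynomial law induced by a linear map. -/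
noncomputable def ofLinear (ψ : M →ₗ[R] N) : PolyLaw R M N where
  toFun A _ _ := LinearMap.lTensor A ψ
  isCompat φ x := by
    show LinearMap.rTensor N φ.toLinearMap (LinearMap.lTensor _ ψ x)
      = LinearMap.lTensor _ ψ (LinearMap.rTensor M φ.toLinearMap x)
    rw [← LinearMap.comp_apply, ← LinearMap.comp_apply,
      LinearMap.rTensor_comp_lTensor, LinearMap.lTensor_comp_rTensor]

/-- Composition of polynomial laws. -/
def comp (g : PolyLaw R N P) (f : PolyLaw R M N) : PolyLaw R M P where
  toFun A _ _ x := g.toFun A (f.toFun A x)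
  isCompat φ x := by rw [g.isCompat φ, f.isCompat φ]

/-- Translation by an element `u : N`, as a polynomial law `N → N`. -/
noncomputable def translation (u : N) : PolyLaw R N N where
  toFun A _ _ x := x + (1 : A) ⊗ₜ[R] u
  isCompat φ x := by
    simp [map_add, LinearMap.rTensor_tmul, map_one]

end PolyLaw

open PolyLaw MvPolynomial

section Aux

open MvPolynomial

variable {R : Type u} [CommRing R] {M N : Type u}
  [AddCommGroup M] [Module R M] [AddCommGroup N] [Module R N] {n : ℕ}

lemma aux_exists_rep (v : Fin n → M) (hv : Submodule.span R (Set.range v) = ⊤)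
    (A : Type u) [CommRing A] [Algebra R A] (x : A ⊗[R] M) :
    ∃ a : Fin n → A, ∑ i, a i ⊗ₜ[R] v i = x := by
  induction x using TensorProduct.induction_on with
  | zero => exact ⟨0, by simp⟩
  | tmul a m =>
      have hm : m ∈ Submodule.span R (Set.range v) := by rw [hv]; trivial
      obtain ⟨c, hc⟩ := (Submodule.mem_span_range_iff_exists_fun R).1 hm
      refine ⟨fun i => c i • a, ?_⟩
      rw [← hc, TensorProduct.tmul_sum]
      exact Finset.sum_congr rfl fun i _ => TensorProduct.smul_tmul _ _ _
  | add x y hx hy =>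
      obtain ⟨a, ha⟩ := hx; obtain ⟨c, hc⟩ := hy
      exact ⟨a + c, by simp [TensorProduct.add_tmul, Finset.sum_add_distrib, ha, hc]⟩

lemma aux_key (φ : PolyLaw R M N) (v : Fin n → M)
    {A : Type u} [CommRing A] [Algebra R A] (a : Fin n → A) :
    φ.toFun A (∑ i, a i ⊗ₜ[R] v i)
      = LinearMap.rTensor N (aeval a : MvPolynomial (Fin n) R →ₐ[R] A).toLinearMap
          (φ.toFun (MvPolynomial (Fin n) R) (∑ i, X i ⊗ₜ[R] v i)) := by
  rw [φ.isCompat (aeval a)]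
  congr 1
  rw [map_sum]
  exact Finset.sum_congr rfl fun i _ => by
    rw [LinearMap.rTensor_tmul]; simp

lemma aux_repr (b : Module.Basis (Fin n) R M) {A B : Type u} [CommRing A] [Algebra R A]
    [CommRing B] [Algebra R B] (α : A →ₐ[R] B) (x : A ⊗[R] M) (i : Fin n) :
    (b.baseChange B).repr (LinearMap.rTensor M α.toLinearMap x) i
      = α ((b.baseChange A).repr x i) := by
  induction x using TensorProduct.induction_on with
  | zero => simp
  | tmul a m => simp [Module.Basis.baseChange_repr_tmul, Algebra.smul_def, map_mul, AlgHom.commutes]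
  | add x y hx hy => simp [map_add, hx, hy]

noncomputable def ofTensor (b : Module.Basis (Fin n) R M) (t : MvPolynomial (Fin n) R ⊗[R] N) :
    PolyLaw R M N where
  toFun A _ _ x := LinearMap.rTensor N
    (aeval (fun i => (b.baseChange A).repr x i) : MvPolynomial (Fin n) R →ₐ[R] A).toLinearMap t
  isCompat {A B} _ _ _ _ α x := by
    have h1 : (aeval (fun i => (b.baseChange B).repr (LinearMap.rTensor M α.toLinearMap x) i) :
        MvPolynomial (Fin n) R →ₐ[R] B)
        = α.comp (aeval fun i => (b.baseChange A).repr x i) := by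
      rw [comp_aeval]
      congr 1
      funext i
      rw [aux_repr]
    show _ = LinearMap.rTensor N _ t
    rw [h1, AlgHom.comp_toLinearMap, LinearMap.rTensor_comp, LinearMap.comp_apply]

lemma aux_repr_X (b : Module.Basis (Fin n) R M) (i : Fin n) :
    (b.baseChange (MvPolynomial (Fin n) R)).repr (∑ j, X j ⊗ₜ[R] b j) i = X i := by
  rw [map_sum]
  rw [Finsupp.coe_finset_sum, Finset.sum_apply]
  simp [Module.Basis.baseChange_repr_tmul, Finsupp.single_apply, ite_smul]

end Aux


/-- A polynomial law `φ : M → N` over `R`, with `M` generated by `v 1, ..., v n`, is completely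
determined by `ι(φ) := φ_{R[x_1,...,x_n]}(x_1 ⊗ v_1 + ... + x_n ⊗ v_n)`; i.e. the map `ι` is
injective.  If moreover `M` is free with basis `v_1, ..., v_n`, then `ι` is a bijection. -/
theorem polyLaw_iota_injective (R : Type u) [CommRing R] (M N : Type u)
    [AddCommGroup M] [Module R M] [AddCommGroup N] [Module R N]
    (n : ℕ) (v : Fin n → M) (hv : Submodule.span R (Set.range v) = ⊤) :
    Function.Injective (fun φ : PolyLaw R M N =>
      φ.toFun (MvPolynomial (Fin n) R) (∑ i, MvPolynomial.X i ⊗ₜ[R] v i)) ∧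
    (∀ b : Module.Basis (Fin n) R M, (∀ i, b i = v i) →
      Function.Bijective (fun φ : PolyLaw R M N =>
        φ.toFun (MvPolynomial (Fin n) R) (∑ i, MvPolynomial.X i ⊗ₜ[R] v i))) := by
  have hinj : Function.Injective (fun φ : PolyLaw R M N =>
      φ.toFun (MvPolynomial (Fin n) R) (∑ i, MvPolynomial.X i ⊗ₜ[R] v i)) := by
    intro φ ψ h
    simp only at h
    apply PolyLaw.ext'
    intro A _ _ x
    obtain ⟨a, ha⟩ := aux_exists_rep v hv A x
    rw [← ha, aux_key φ v a, aux_key ψ v a, h]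
  refine ⟨hinj, fun b hb => ⟨hinj, fun t => ?_⟩⟩
  refine ⟨ofTensor b t, ?_⟩
  simp only
  have hsum : (∑ i, (MvPolynomial.X i : MvPolynomial (Fin n) R) ⊗ₜ[R] v i)
      = ∑ i, (MvPolynomial.X i : MvPolynomial (Fin n) R) ⊗ₜ[R] b i :=
    Finset.sum_congr rfl fun i _ => by rw [hb]
  rw [hsum]
  have key : (ofTensor b t).toFun (MvPolynomial (Fin n) R)
      (∑ i, MvPolynomial.X i ⊗ₜ[R] b i) = t := by
    show LinearMap.rTensor N _ t = t
    have hc : (fun i => (b.baseChange (MvPolynomial (Fin n) R)).repr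
        (∑ j, MvPolynomial.X j ⊗ₜ[R] b j) i) = MvPolynomial.X := funext fun i => aux_repr_X b i
    rw [hc, MvPolynomial.aeval_X_left]
    simp
  exact key
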